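/- Let f(x) = (1/2)‖W^T x − y‖² with W ∈ ℝ^{d×m}, y ∈ ℝ^m. For 0 < α < 1 and base point c ∈ ℝ^d, the j-th component of the coordinate-wise Caputo fractional gradient of order α at x equals (ᶜ_{c_j}D^α_{x_j} x_j) · [ Σ_{i=1}^m ( w_{ij}² γ_α (x_j − c_j) + w_{ij}(w_i^T x − y_i) ) ], where γ_α = −(1−α)/(2−α) and w_i is the i-th column of W. -/

import Mathlib

open intervalIntegral in
lemma int0 (α L P Q : ℝ) (hα0 : 0 < α) (hα1 : α < 1) :
    ∫ t in (0:ℝ)..L, (P * t ^ (-α) + Q * t ^ (1 - α)) =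
      P * L ^ (1 - α) / (1 - α) + Q * L ^ (2 - α) / (2 - α) := by
  have h1 : (-1:ℝ) < -α := by linarith
  have h2 : (-1:ℝ) < 1 - α := by linarith
  rw [intervalIntegral.integral_add ((intervalIntegral.intervalIntegrable_rpow' h1).const_mul P)
      ((intervalIntegral.intervalIntegrable_rpow' h2).const_mul Q),
    intervalIntegral.integral_const_mul, intervalIntegral.integral_const_mul,
    integral_rpow (Or.inl h1), integral_rpow (Or.inl h2),
    Real.zero_rpow (by linarith : -α + 1 ≠ 0), Real.zero_rpow (by linarith : 1 - α + 1 ≠ 0),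
    show -α + 1 = 1 - α from by ring, show 1 - α + 1 = 2 - α from by ring]
  ring

lemma intlin (α a b A B : ℝ) (hα0 : 0 < α) (hα1 : α < 1) (hab : a ≤ b) :
    ∫ s in a..b, (A * s + B) * (b - s) ^ (-α) =
      (A * b + B) * (b - a) ^ (1 - α) / (1 - α) + (-A) * (b - a) ^ (2 - α) / (2 - α) := by
  have key : ∫ s in a..b, (A * s + B) * (b - s) ^ (-α)
      = ∫ s in a..b, ((A * b + B) * (b - s) ^ (-α) + (-A) * (b - s) ^ (1 - α)) := by
    apply intervalIntegral.integral_congr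
    intro s hs
    rw [Set.uIcc_of_le hab] at hs
    have hbs : 0 ≤ b - s := by linarith [hs.2]
    rcases eq_or_lt_of_le hbs with h | h
    · have hsb : s = b := by linarith
      subst hsb
      simp [Real.zero_rpow (by linarith : -α ≠ 0), Real.zero_rpow (by linarith : (1:ℝ) - α ≠ 0)]
    · have hh : (b - s) ^ (1 - α) = (b - s) * (b - s) ^ (-α) := by
        rw [show (1:ℝ) - α = 1 + -α from by ring, Real.rpow_add h, Real.rpow_one]
      simp only [hh]; ring
  rw [key]
  have comp := intervalIntegral.integral_comp_sub_left
    (a := a) (b := b) (fun t => (A * b + B) * t ^ (-α) + (-A) * t ^ (1 - α)) b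
  simp only [sub_self] at comp
  rw [comp]
  exact int0 α (b - a) _ _ hα0 hα1

lemma intlin' (α a b A B : ℝ) (hα0 : 0 < α) (hα1 : α < 1) (hab : a ≤ b) :
    ∫ s in a..b, (A * s + B) * (s - a) ^ (-α) =
      (A * a + B) * (b - a) ^ (1 - α) / (1 - α) + A * (b - a) ^ (2 - α) / (2 - α) := by
  have key : ∫ s in a..b, (A * s + B) * (s - a) ^ (-α)
      = ∫ s in a..b, ((A * a + B) * (s - a) ^ (-α) + A * (s - a) ^ (1 - α)) := by
    apply intervalIntegral.integral_congr
    intro s hs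
    rw [Set.uIcc_of_le hab] at hs
    have hbs : 0 ≤ s - a := by linarith [hs.1]
    rcases eq_or_lt_of_le hbs with h | h
    · have hsa : s = a := by linarith
      subst hsa
      simp [Real.zero_rpow (by linarith : -α ≠ 0), Real.zero_rpow (by linarith : (1:ℝ) - α ≠ 0)]
    · have hh : (s - a) ^ (1 - α) = (s - a) * (s - a) ^ (-α) := by
        rw [show (1:ℝ) - α = 1 + -α from by ring, Real.rpow_add h, Real.rpow_one]
      simp only [hh]; ring
  rw [key]
  have comp := intervalIntegral.integral_comp_sub_right
    (a := a) (b := b) (fun t => (A * a + B) * t ^ (-α) + A * t ^ (1 - α)) a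
  simp only [sub_self] at comp
  rw [comp]
  exact int0 α (b - a) _ _ hα0 hα1

lemma deriv_quad (m : ℕ) (w r : Fin m → ℝ) :
    deriv (fun u => (1/2 : ℝ) * ∑ i, (w i * u + r i) ^ 2)
      = fun s => (∑ i, w i ^ 2) * s + ∑ i, w i * r i := by
  funext s
  have h : HasDerivAt (fun u => (1/2 : ℝ) * ∑ i, (w i * u + r i) ^ 2)
      ((1/2 : ℝ) * ∑ i, (2 * (w i * s + r i) * w i)) s := by
    apply HasDerivAt.const_mul
    apply HasDerivAt.fun_sum
    intro i _
    have h1 : HasDerivAt (fun u => w i * u + r i) (w i) s := by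
      simpa using ((hasDerivAt_id s).const_mul (w i)).add_const (r i)
    simpa using h1.fun_pow 2
  rw [h.deriv, Finset.mul_sum, Finset.sum_mul, ← Finset.sum_add_distrib]
  exact Finset.sum_congr rfl fun i _ => by ring

/-- The Caputo fractional derivative of order `α` (0 < α < 1) of `f` at `x`
with base point `c`. -/
noncomputable def caputo (α c : ℝ) (f : ℝ → ℝ) (x : ℝ) : ℝ :=
  if c ≤ x then (1 / Real.Gamma (1 - α)) * ∫ s in c..x, deriv f s * (x - s) ^ (-α)
  else (-1 / Real.Gamma (1 - α)) * ∫ s in x..c, deriv f s * (s - x) ^ (-α)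

/-- j-th component of the coordinate-wise Caputo fractional gradient of order α:
the one-dimensional Caputo derivative in the j-th coordinate. -/
noncomputable def caputoGrad {d : ℕ} (α : ℝ) (c : Fin d → ℝ) (f : (Fin d → ℝ) → ℝ)
    (x : Fin d → ℝ) (j : Fin d) : ℝ :=
  caputo α (c j) (fun u => f (Function.update x j u)) (x j)

theorem caputoGrad_leastSquares {d m : ℕ} (W : Matrix (Fin d) (Fin m) ℝ)
    (y : Fin m → ℝ) (α : ℝ) (hα0 : 0 < α) (hα1 : α < 1)
    (c x : Fin d → ℝ) (j : Fin d) :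
    caputoGrad α c (fun x => (1 / 2) * ∑ i, (∑ l, W l i * x l - y i) ^ 2) x j =
      (Real.sign (x j - c j) * |x j - c j| ^ (1 - α) / Real.Gamma (2 - α)) *
        ∑ i, ((W j i) ^ 2 * (-((1 - α) / (2 - α))) * (x j - c j) +
          W j i * (∑ l, W l i * x l - y i)) := by
  classical
  set w : Fin m → ℝ := fun i => W j i with hw
  set r : Fin m → ℝ := fun i => (∑ l, W l i * x l) - y i - W j i * x j with hr
  have hupd : ∀ u i, (∑ l, W l i * Function.update x j u l) - y i = w i * u + r i := by
    intro u i
    have hterm : ∀ l, W l i * Function.update x j u l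
        = W l i * x l + (if l = j then W j i * u - W j i * x j else 0) := by
      intro l
      rcases eq_or_ne l j with h | h
      · subst h; simp
      · simp [Function.update_of_ne h, h]
    rw [Finset.sum_congr rfl fun l _ => hterm l, Finset.sum_add_distrib,
      Finset.sum_ite_eq' Finset.univ j]
    simp [hw, hr]; ring
  have hfun : (fun u => (1/2 : ℝ) * ∑ i, ((∑ l, W l i * Function.update x j u l) - y i) ^ 2)
      = fun u => (1/2 : ℝ) * ∑ i, (w i * u + r i) ^ 2 := by
    funext u
    congr 1
    exact Finset.sum_congr rfl fun i _ => by rw [hupd]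
  set A : ℝ := ∑ i, w i ^ 2 with hA
  set B : ℝ := ∑ i, w i * r i with hB
  have hRHS : (∑ i, ((W j i) ^ 2 * (-((1 - α) / (2 - α))) * (x j - c j) +
          W j i * (∑ l, W l i * x l - y i)))
      = A * (-((1 - α) / (2 - α))) * (x j - c j) + (A * x j + B) := by
    have hterm : ∀ i, (W j i) ^ 2 * (-((1 - α) / (2 - α))) * (x j - c j) +
          W j i * (∑ l, W l i * x l - y i)
        = w i ^ 2 * ((-((1 - α) / (2 - α))) * (x j - c j) + x j) + w i * r i := by
      intro i
      simp only [hw, hr]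
      ring
    rw [Finset.sum_congr rfl fun i _ => hterm i, Finset.sum_add_distrib, ← Finset.sum_mul,
      ← hA, ← hB]
    ring
  rw [hRHS]
  show caputo α (c j) (fun u => (1/2 : ℝ) *
      ∑ i, ((∑ l, W l i * Function.update x j u l) - y i) ^ 2) (x j) = _
  rw [hfun]
  unfold caputo
  rw [deriv_quad m w r, ← hA, ← hB]
  have hΓpos : 0 < Real.Gamma (1 - α) := Real.Gamma_pos_of_pos (by linarith)
  have h1 : (1:ℝ) - α ≠ 0 := by linarith
  have h2 : (2:ℝ) - α ≠ 0 := by linarith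
  have hΓ : Real.Gamma (1 - α) ≠ 0 := ne_of_gt hΓpos
  have h3 : -(α * Real.Gamma (1 - α)) + Real.Gamma (1 - α) ≠ 0 := by
    have : -(α * Real.Gamma (1 - α)) + Real.Gamma (1 - α) = (1 - α) * Real.Gamma (1 - α) := by ring
    rw [this]; exact mul_ne_zero h1 hΓ
  have hΓ2 : Real.Gamma (2 - α) = (1 - α) * Real.Gamma (1 - α) := by
    rw [show (2:ℝ) - α = (1 - α) + 1 from by ring, Real.Gamma_add_one (by linarith)]
  by_cases hcx : c j ≤ x j
  · rw [if_pos hcx, intlin α (c j) (x j) A B hα0 hα1 hcx]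
    rcases eq_or_lt_of_le hcx with h | h
    · rw [← h]
      simp [Real.zero_rpow (by linarith : (1:ℝ) - α ≠ 0),
        Real.zero_rpow (by linarith : (2:ℝ) - α ≠ 0)]
    · have hpos : 0 < x j - c j := by linarith
      rw [Real.sign_of_pos hpos, abs_of_pos hpos, hΓ2,
        show (x j - c j) ^ ((2:ℝ) - α) = (x j - c j) ^ ((1:ℝ) - α) * (x j - c j) from by
          rw [show (2:ℝ) - α = (1 - α) + 1 from by ring, Real.rpow_add hpos, Real.rpow_one]]
      field_simp
      ring
  · rw [if_neg hcx]
    push_neg at hcx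
    have hle : x j ≤ c j := le_of_lt hcx
    rw [intlin' α (x j) (c j) A B hα0 hα1 hle]
    have hneg : x j - c j < 0 := by linarith
    have hpos : 0 < c j - x j := by linarith
    rw [Real.sign_of_neg hneg, abs_of_neg hneg, hΓ2,
      show -(x j - c j) = c j - x j from by ring,
      show (c j - x j) ^ ((2:ℝ) - α) = (c j - x j) ^ ((1:ℝ) - α) * (c j - x j) from by
        rw [show (2:ℝ) - α = (1 - α) + 1 from by ring, Real.rpow_add hpos, Real.rpow_one]]
    field_simp
    ring
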